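/- Let α > −1 with α ≠ 0 and β > 0, let Q(p) = (β/α)·((1−p)^{−α/(α+1)} − 1) be the GP(α,β) quantile function, m = ∫_0^1 Q(u) du = β its mean, and ES(p) = (1−p)^{-1} ∫_p^1 Q(u) du. Then for every p ∈ (0,1) with Q(p) > β, the θ-index θ(p) = (1−p)·(ES(p) − Q(p))/(Q(p) − β) equals (1−p)·(α·Q(p) + β)/(Q(p) − β). -/

import Mathlib

open MeasureTheory Set

lemma gp_aux_int (α β : ℝ) (hα : -1 < α) (hα0 : α ≠ 0) (p : ℝ) (hp : 0 ≤ p) (hp1 : p ≤ 1) :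
    ∫ u in p..1, (β / α) * ((1 - u) ^ (-(α / (α + 1))) - 1)
      = (β / α) * ((α + 1) * (1 - p) ^ ((α + 1)⁻¹) - (1 - p)) := by
  have hα1 : (0:ℝ) < α + 1 := by linarith
  set γ : ℝ := -(α / (α + 1)) with hγdef
  have hγ : -1 < γ := by
    rw [hγdef, neg_lt, neg_neg]
    exact (div_lt_one hα1).mpr (by linarith)
  have h2 : γ + 1 = (α + 1)⁻¹ := by
    rw [hγdef]
    field_simp
    ring
  have hint2 : IntervalIntegrable (fun u => ((1:ℝ) - u) ^ γ) volume p 1 := by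
    have h := (intervalIntegral.intervalIntegrable_rpow' (a := 1 - p) (b := 1 - 1) hγ).comp_sub_left 1
    simpa using h
  have hint1 : (∫ u in p..1, ((1:ℝ) - u) ^ γ) = (α + 1) * (1 - p) ^ ((α + 1)⁻¹) := by
    rw [intervalIntegral.integral_comp_sub_left (fun x => x ^ γ) 1]
    rw [sub_self]
    rw [integral_rpow (Or.inl hγ)]
    rw [Real.zero_rpow (by rw [h2]; positivity), h2, sub_zero]
    field_simp [hα1.ne']
  have : (∫ u in p..1, (β / α) * ((1 - u) ^ γ - 1))
      = (β / α) * ((∫ u in p..1, ((1:ℝ) - u) ^ γ) - (∫ u in p..1, (1:ℝ))) := by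
    rw [intervalIntegral.integral_const_mul, intervalIntegral.integral_sub hint2
      intervalIntegrable_const]
  rw [this, hint1, intervalIntegral.integral_const]
  simp [smul_eq_mul]

/-- For the GP(α,β) quantile function
`Q p = (β/α)·((1-p)^{-α/(α+1)} - 1)` with `α > -1`, `α ≠ 0`, `β > 0`, the mean is
`m = ∫_0^1 Q = β`, and for every `p ∈ (0,1)` with `Q p > β` the θ-index
`θ(p) = (1-p)·(ES(p) - Q p)/(Q p - β)` equals `(1-p)·(α·Q p + β)/(Q p - β)`,
where `ES(p) = (1-p)⁻¹ ∫_p^1 Q`. -/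
theorem gp_theta_index
    (α β : ℝ) (hα : -1 < α) (hα0 : α ≠ 0) (hβ : 0 < β)
    (Q : ℝ → ℝ)
    (hQ : ∀ p ∈ Set.Ioo (0:ℝ) 1,
      Q p = (β / α) * ((1 - p) ^ (-(α / (α + 1))) - 1)) :
    (∫ u in (0:ℝ)..1, Q u) = β
    ∧ ∀ p ∈ Set.Ioo (0:ℝ) 1, β < Q p →
        (1 - p) * ((1 - p)⁻¹ * (∫ u in p..1, Q u) - Q p) / (Q p - β)
          = (1 - p) * (α * Q p + β) / (Q p - β) := by
  have hα1 : (0:ℝ) < α + 1 := by linarith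
  have hone : ({1} : Set ℝ)ᶜ ∈ ae volume :=
    compl_mem_ae_iff.mpr (measure_singleton _)
  have hcong : ∀ p : ℝ, 0 ≤ p → p < 1 →
      (∫ u in p..1, Q u)
        = ∫ u in p..1, (β / α) * ((1 - u) ^ (-(α / (α + 1))) - 1) := by
    intro p hp hp1
    apply intervalIntegral.integral_congr_ae
    filter_upwards [hone] with x hx hmem
    rw [Set.uIoc_of_le hp1.le] at hmem
    have hx1 : x ≠ 1 := by simpa using hx
    exact hQ x ⟨lt_of_le_of_lt hp hmem.1, lt_of_le_of_ne hmem.2 hx1⟩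
  constructor
  · rw [hcong 0 le_rfl one_pos, gp_aux_int α β hα hα0 0 le_rfl zero_le_one]
    simp only [sub_zero, Real.one_rpow]
    field_simp
    ring
  · rintro p ⟨hp0, hp1⟩ hQp
    have h1p : (0:ℝ) < 1 - p := by linarith
    have hint : (∫ u in p..1, Q u)
        = (β / α) * ((α + 1) * (1 - p) ^ ((α + 1)⁻¹) - (1 - p)) := by
      rw [hcong p hp0.le hp1]
      exact gp_aux_int α β hα hα0 p hp0.le hp1.le
    have hexp : (1 - p) ^ ((α + 1)⁻¹)
        = (1 - p) * (1 - p) ^ (-(α / (α + 1))) := by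
      have : (α + 1)⁻¹ = 1 + (-(α / (α + 1))) := by field_simp; ring
      rw [this, Real.rpow_add h1p, Real.rpow_one]
    have hQpf := hQ p ⟨hp0, hp1⟩
    set t : ℝ := (1 - p) ^ (-(α / (α + 1))) with ht
    rw [hint, hexp, hQpf]
    congr 1
    field_simp
    ring
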